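/- The G-transform of a Γ(m,1)-distributed random variable is stochastically less than a standard Gaussian: for all real w, P(Z ≤ w) ≤ P(G(T) ≤ w), where Z is standard Gaussian and T ~ Γ(m,1). -/

import Mathlib

open MeasureTheory Real Set Filter Topology

noncomputable def Qf (m s : ℝ) : ℝ := 2 * (s - m - m * (Real.log s - Real.log m))
noncomputable def Gf (m s : ℝ) : ℝ :=
  if s < m then -Real.sqrt (Qf m s) else Real.sqrt (Qf m s)
noncomputable def gf (m s : ℝ) : ℝ := s ^ (m - 1) * Real.exp (-s) / Real.Gamma m
noncomputable def phif (z : ℝ) : ℝ := Real.exp (-z ^ 2 / 2) / Real.sqrt (2 * Real.pi)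
noncomputable def Nf (w : ℝ) : ℝ := ∫ z in Set.Iic w, phif z
noncomputable def Hf (m s : ℝ) : ℝ := ∫ t in Set.Ioc 0 s, gf m t
noncomputable def Ff (m s : ℝ) : ℝ := Hf m s - Nf (Gf m s)

section basic
variable {m s : ℝ} (hm : 0 < m)

lemma Qf_hasDerivAt (hs : 0 < s) : HasDerivAt (Qf m) (2 * (1 - m * s⁻¹)) s := by
  have h : HasDerivAt (fun s => s - m - m * (Real.log s - Real.log m))
      (1 - m * s⁻¹) s := by
    exact (((hasDerivAt_id s).sub_const m).sub
      (((Real.hasDerivAt_log hs.ne').sub_const (Real.log m)).const_mul m))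
  exact h.const_mul 2

include hm in
lemma Qf_nonneg (hs : 0 < s) : 0 ≤ Qf m s := by
  have h : Real.log (s / m) ≤ s / m - 1 := Real.log_le_sub_one_of_pos (by positivity)
  rw [Real.log_div hs.ne' hm.ne'] at h
  have h2 : m * (Real.log s - Real.log m) ≤ m * (s / m - 1) :=
    mul_le_mul_of_nonneg_left h hm.le
  have h3 : m * (s / m - 1) = s - m := by field_simp
  unfold Qf; nlinarith

include hm in
lemma Qf_pos (hs : 0 < s) (hne : s ≠ m) : 0 < Qf m s := by
  have h : Real.log (s / m) < s / m - 1 :=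
    Real.log_lt_sub_one_of_pos (by positivity) (by
      intro h; exact hne (by field_simp at h; linarith))
  rw [Real.log_div hs.ne' hm.ne'] at h
  have h2 : m * (Real.log s - Real.log m) < m * (s / m - 1) :=
    mul_lt_mul_of_pos_left h hm
  have h3 : m * (s / m - 1) = s - m := by field_simp
  unfold Qf; nlinarith

lemma Qf_self : Qf m m = 0 := by unfold Qf; ring

lemma Gf_self : Gf m m = 0 := by simp [Gf, Qf_self]

lemma Gf_of_lt (h : s < m) : Gf m s = -Real.sqrt (Qf m s) := if_pos h
lemma Gf_of_ge (h : m ≤ s) : Gf m s = Real.sqrt (Qf m s) := if_neg (not_lt.2 h)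

include hm in
lemma Gf_neg_of_lt (hs : 0 < s) (h : s < m) : Gf m s < 0 := by
  rw [Gf_of_lt h]
  simpa using Real.sqrt_pos.2 (Qf_pos hm hs h.ne)

include hm in
lemma Gf_pos_of_gt (h : m < s) : 0 < Gf m s := by
  rw [Gf_of_ge h.le]
  exact Real.sqrt_pos.2 (Qf_pos hm (hm.trans h) h.ne')

include hm in
lemma Gf_sq (hs : 0 < s) : (Gf m s) ^ 2 = Qf m s := by
  unfold Gf
  split <;> rw [show (2:ℕ) = 2 from rfl] <;>
    simp [neg_pow, Real.sq_sqrt (Qf_nonneg hm hs)]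

include hm in
lemma Gf_ne_zero (hs : 0 < s) (hne : s ≠ m) : Gf m s ≠ 0 := by
  rcases lt_or_gt_of_ne hne with h | h
  · exact (Gf_neg_of_lt hm hs h).ne
  · exact (Gf_pos_of_gt hm h).ne'

end basic

section bounds
variable {m : ℝ} (hm : 0 < m)

include hm in
lemma A_mono : MonotoneOn (fun s => (s - m) ^ 2 / m - Qf m s) (Set.Ioi 0) := by
  have hd : ∀ x ∈ Set.Ioi (0:ℝ), HasDerivAt (fun s => (s - m) ^ 2 / m - Qf m s)
      (2 * (x - m) / m - 2 * (1 - m * x⁻¹)) x := by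
    intro x hx
    exact ((((hasDerivAt_id x).sub_const m).pow 2).div_const m).sub
      (Qf_hasDerivAt hx) |>.congr_deriv (by simp only [id_eq]; ring)
  apply monotoneOn_of_deriv_nonneg (convex_Ioi 0)
  · intro x hx
    exact (hd x hx).continuousAt.continuousWithinAt
  · intro x hx
    rw [interior_Ioi] at hx
    exact (hd x hx).differentiableAt.differentiableWithinAt
  · intro x hx
    rw [interior_Ioi] at hx
    rw [(hd x hx).deriv]
    have hx0 : (0:ℝ) < x := hx
    have key : 2 * (x - m) / m - 2 * (1 - m * x⁻¹) = 2 * (x - m) ^ 2 / (m * x) := by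
      field_simp
    rw [key]; positivity

include hm in
lemma B_anti : AntitoneOn (fun s => (s - m) ^ 2 / s - Qf m s) (Set.Ioi 0) := by
  have hd : ∀ x ∈ Set.Ioi (0:ℝ), HasDerivAt (fun s => (s - m) ^ 2 / s - Qf m s)
      ((2 * (x - m) * x - (x - m) ^ 2) / x ^ 2 - 2 * (1 - m * x⁻¹)) x := by
    intro x hx
    have hx0 : (0:ℝ) < x := hx
    exact ((((hasDerivAt_id x).sub_const m).pow 2).div (hasDerivAt_id x) hx0.ne').sub
      (Qf_hasDerivAt hx) |>.congr_deriv (by simp only [id_eq, Pi.pow_apply]; ring)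
  apply antitoneOn_of_deriv_nonpos (convex_Ioi 0)
  · intro x hx
    exact (hd x hx).continuousAt.continuousWithinAt
  · intro x hx
    rw [interior_Ioi] at hx
    exact (hd x hx).differentiableAt.differentiableWithinAt
  · intro x hx
    rw [interior_Ioi] at hx
    rw [(hd x hx).deriv]
    have hx0 : (0:ℝ) < x := hx
    have key : (2 * (x - m) * x - (x - m) ^ 2) / x ^ 2 - 2 * (1 - m * x⁻¹)
        = -((x - m) ^ 2 / x ^ 2) := by
      field_simp; ring
    rw [key]
    simp [div_nonneg (sq_nonneg _) (sq_nonneg x)]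

include hm in
lemma Qf_ge_left {s : ℝ} (hs : 0 < s) (hsm : s ≤ m) : (s - m) ^ 2 / m ≤ Qf m s := by
  have := A_mono hm hs (Set.mem_Ioi.2 hm) hsm
  simp only [sub_self, Qf_self] at this
  simp only [ne_eq, zero_pow, OfNat.ofNat_ne_zero, not_false_eq_true, zero_div] at this
  linarith [this]

include hm in
lemma Qf_le_left {s : ℝ} (hs : 0 < s) (hsm : s ≤ m) : Qf m s ≤ (s - m) ^ 2 / s := by
  have := B_anti hm hs (Set.mem_Ioi.2 hm) hsm
  simp only [sub_self, Qf_self] at this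
  simp only [ne_eq, zero_pow, OfNat.ofNat_ne_zero, not_false_eq_true, zero_div] at this
  linarith [this]

include hm in
lemma Qf_le_right {s : ℝ} (hsm : m ≤ s) : Qf m s ≤ (s - m) ^ 2 / m := by
  have := A_mono hm (Set.mem_Ioi.2 hm) (Set.mem_Ioi.2 (hm.trans_le hsm)) hsm
  simp only [sub_self, Qf_self] at this
  simp only [ne_eq, zero_pow, OfNat.ofNat_ne_zero, not_false_eq_true, zero_div] at this
  linarith [this]

include hm in
lemma Qf_ge_right {s : ℝ} (hsm : m ≤ s) : (s - m) ^ 2 / s ≤ Qf m s := by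
  have := B_anti hm (Set.mem_Ioi.2 hm) (Set.mem_Ioi.2 (hm.trans_le hsm)) hsm
  simp only [sub_self, Qf_self] at this
  simp only [ne_eq, zero_pow, OfNat.ofNat_ne_zero, not_false_eq_true, zero_div] at this
  linarith [this]

end bounds

section Gprops
variable {m : ℝ} (hm : 0 < m)

include hm in
lemma Qf_strictAntiOn : StrictAntiOn (Qf m) (Set.Ioc 0 m) := by
  apply strictAntiOn_of_deriv_neg (convex_Ioc 0 m)
  · intro x hx
    exact (Qf_hasDerivAt hx.1).continuousAt.continuousWithinAt
  · intro x hx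
    rw [interior_Ioc] at hx
    rw [(Qf_hasDerivAt hx.1).deriv]
    have h1 : 1 < m * x⁻¹ := by
      rw [← div_eq_mul_inv]
      exact (one_lt_div hx.1).2 hx.2
    linarith

include hm in
lemma Qf_strictMonoOn : StrictMonoOn (Qf m) (Set.Ici m) := by
  apply strictMonoOn_of_deriv_pos (convex_Ici m)
  · intro x hx
    exact (Qf_hasDerivAt (hm.trans_le hx)).continuousAt.continuousWithinAt
  · intro x hx
    rw [interior_Ici] at hx
    rw [(Qf_hasDerivAt (hm.trans hx)).deriv]
    have h1 : m * x⁻¹ < 1 := by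
      rw [← div_eq_mul_inv]
      exact (div_lt_one (hm.trans hx)).2 hx
    linarith

include hm in
lemma Gf_strictMonoOn : StrictMonoOn (Gf m) (Set.Ioi 0) := by
  intro x hx y hy hxy
  simp only [Set.mem_Ioi] at hx hy
  rcases le_or_gt y m with hym | hym
  · have hxm : x < m := hxy.trans_le hym
    have hGy : Gf m y = -Real.sqrt (Qf m y) := by
      rcases lt_or_eq_of_le hym with h | h
      · exact Gf_of_lt h
      · subst h; rw [Gf_self, Qf_self, Real.sqrt_zero, neg_zero]
    rw [Gf_of_lt hxm, hGy, neg_lt_neg_iff]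
    exact Real.sqrt_lt_sqrt (Qf_nonneg hm hy)
      (Qf_strictAntiOn hm ⟨hx, hxm.le⟩ ⟨hy, hym⟩ hxy)
  · rcases le_or_gt m x with hxm | hxm
    · rw [Gf_of_ge hxm, Gf_of_ge hym.le]
      exact Real.sqrt_lt_sqrt (Qf_nonneg hm hx)
        (Qf_strictMonoOn hm hxm hym.le hxy)
    · exact (Gf_neg_of_lt hm hx hxm).trans (Gf_pos_of_gt hm hym)

include hm in
lemma Gf_abs_le (s : ℝ) : -Real.sqrt (Qf m s) ≤ Gf m s ∧ Gf m s ≤ Real.sqrt (Qf m s) := by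
  unfold Gf
  split
  · exact ⟨le_rfl, by linarith [Real.sqrt_nonneg (Qf m s)]⟩
  · exact ⟨by linarith [Real.sqrt_nonneg (Qf m s)], le_rfl⟩

include hm in
lemma Qf_continuousAt {s : ℝ} (hs : 0 < s) : ContinuousAt (Qf m) s :=
  (Qf_hasDerivAt hs).continuousAt

include hm in
lemma Gf_continuousAt {s : ℝ} (hs : 0 < s) : ContinuousAt (Gf m) s := by
  rcases lt_trichotomy s m with h | h | h
  · have : ∀ᶠ x in 𝓝 s, (fun x => -Real.sqrt (Qf m x)) x = Gf m x := by
      filter_upwards [Iio_mem_nhds h] with x hx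
      exact (Gf_of_lt hx).symm
    exact ContinuousAt.congr ((Qf_continuousAt hm hs).sqrt.neg) this
  · -- continuity at m via squeeze
    subst h
    have hq : ContinuousAt (fun x => Real.sqrt (Qf s x)) s := (Qf_continuousAt hm hs).sqrt
    have hq0 : Real.sqrt (Qf s s) = 0 := by rw [Qf_self, Real.sqrt_zero]
    rw [ContinuousAt, Gf_self]
    have h1 : Tendsto (fun x => Real.sqrt (Qf s x)) (𝓝 s) (𝓝 0) := by
      rw [← hq0]; exact hq
    have h2 : Tendsto (fun x => -Real.sqrt (Qf s x)) (𝓝 s) (𝓝 0) := by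
      simpa using h1.neg
    refine tendsto_of_tendsto_of_tendsto_of_le_of_le h2 h1 ?_ ?_
    · exact fun x => (Gf_abs_le hm x).1
    · exact fun x => (Gf_abs_le hm x).2
  · have : ∀ᶠ x in 𝓝 s, (fun x => Real.sqrt (Qf m x)) x = Gf m x := by
      filter_upwards [Ioi_mem_nhds h] with x hx
      exact (Gf_of_ge hx.le).symm
    exact ContinuousAt.congr (Qf_continuousAt hm hs).sqrt this

include hm in
lemma Gf_hasDerivAt {s : ℝ} (hs : 0 < s) (hne : s ≠ m) :
    HasDerivAt (Gf m) ((s - m) / (s * Gf m s)) s := by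
  have hQpos : 0 < Qf m s := Qf_pos hm hs hne
  have hQd := Qf_hasDerivAt (m := m) hs
  have hsq : Real.sqrt (Qf m s) ≠ 0 := (Real.sqrt_pos.2 hQpos).ne'
  rcases lt_or_gt_of_ne hne with h | h
  · have hd : HasDerivAt (fun x => -Real.sqrt (Qf m x))
        (-(2 * (1 - m * s⁻¹) / (2 * Real.sqrt (Qf m s)))) s :=
      (hQd.sqrt hQpos.ne').neg
    have heq : ∀ᶠ x in 𝓝 s, (fun x => -Real.sqrt (Qf m x)) x = Gf m x := by
      filter_upwards [Iio_mem_nhds h] with x hx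
      exact (Gf_of_lt hx).symm
    refine (hd.congr_of_eventuallyEq (EventuallyEq.symm heq)).congr_deriv ?_
    rw [Gf_of_lt h]
    field_simp
  · have hd : HasDerivAt (fun x => Real.sqrt (Qf m x))
        (2 * (1 - m * s⁻¹) / (2 * Real.sqrt (Qf m s))) s := hQd.sqrt hQpos.ne'
    have heq : ∀ᶠ x in 𝓝 s, (fun x => Real.sqrt (Qf m x)) x = Gf m x := by
      filter_upwards [Ioi_mem_nhds h] with x hx
      exact (Gf_of_ge hx.le).symm
    refine (hd.congr_of_eventuallyEq (EventuallyEq.symm heq)).congr_deriv ?_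
    rw [Gf_of_ge h.le]
    field_simp

end Gprops


lemma sqrt_tendsto_atTop' : Tendsto Real.sqrt atTop atTop := by
  apply tendsto_atTop_atTop.2
  intro b
  refine ⟨max 0 (b ^ 2), fun a ha => ?_⟩
  calc b ≤ |b| := le_abs_self b
    _ = Real.sqrt (b ^ 2) := (Real.sqrt_sq_eq_abs b).symm
    _ ≤ Real.sqrt a := Real.sqrt_le_sqrt (le_trans (le_max_right _ _) ha)

section Glimits
variable {m : ℝ} (hm : 0 < m)

include hm in
lemma Qf_lower_atTop {s : ℝ} (hs : 0 < s) :
    s - (2 * m * Real.log (2 * m) - 2 * m * Real.log m) ≤ Qf m s := by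
  have h : Real.log (s / (2 * m)) ≤ s / (2 * m) - 1 :=
    Real.log_le_sub_one_of_pos (by positivity)
  rw [Real.log_div hs.ne' (by positivity)] at h
  have h2 : 2 * m * (Real.log s - Real.log (2 * m)) ≤ 2 * m * (s / (2 * m) - 1) :=
    mul_le_mul_of_nonneg_left h (by positivity)
  have h3 : 2 * m * (s / (2 * m) - 1) = s - 2 * m := by field_simp
  unfold Qf; nlinarith

include hm in
lemma Gf_tendsto_atTop : Tendsto (Gf m) atTop atTop := by
  set C := 2 * m * Real.log (2 * m) - 2 * m * Real.log m with hC
  have h1 : Tendsto (fun s : ℝ => Real.sqrt (s - C)) atTop atTop :=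
    sqrt_tendsto_atTop'.comp (tendsto_atTop_add_const_right _ (-C) tendsto_id)
  apply tendsto_atTop_mono' _ _ h1
  filter_upwards [eventually_ge_atTop m, eventually_gt_atTop (0:ℝ)] with s hsm hs0
  rw [Gf_of_ge hsm]
  exact Real.sqrt_le_sqrt (Qf_lower_atTop hm hs0)

include hm in
lemma Qf_lower_zero {s : ℝ} (hs : 0 < s) :
    -2 * m - 2 * m * Real.log s + 2 * m * Real.log m ≤ Qf m s := by
  unfold Qf; nlinarith

include hm in
lemma Gf_tendsto_zero : Tendsto (Gf m) (𝓝[>] (0:ℝ)) atBot := by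
  have hlog : Tendsto (fun s : ℝ => -2 * m - 2 * m * Real.log s + 2 * m * Real.log m)
      (𝓝[>] (0:ℝ)) atTop := by
    have h1 : Tendsto (fun s : ℝ => Real.log s) (𝓝[>] (0:ℝ)) atBot :=
      Real.tendsto_log_nhdsGT_zero
    have h2 : Tendsto (fun s : ℝ => -2 * m * Real.log s) (𝓝[>] (0:ℝ)) atTop := by
      have := Tendsto.const_mul_atBot_of_neg (by nlinarith : -2 * m < 0) h1
      simpa using this
    have := tendsto_atTop_add_const_right _ (-2 * m + 2 * m * Real.log m) h2
    apply this.congr'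
    filter_upwards with s; ring
  have h1 : Tendsto (fun s : ℝ => Real.sqrt
      (-2 * m - 2 * m * Real.log s + 2 * m * Real.log m)) (𝓝[>] (0:ℝ)) atTop :=
    sqrt_tendsto_atTop'.comp hlog
  have h2 : Tendsto (fun s : ℝ => -Real.sqrt
      (-2 * m - 2 * m * Real.log s + 2 * m * Real.log m)) (𝓝[>] (0:ℝ)) atBot :=
    tendsto_neg_atTop_atBot.comp h1
  apply tendsto_atBot_mono' _ _ h2
  filter_upwards [eventually_mem_nhdsWithin.and
    (eventually_nhdsWithin_of_eventually_nhds (eventually_lt_nhds hm))] with s hs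
  obtain ⟨hs0, hsm⟩ := hs
  have hs0' : (0:ℝ) < s := hs0
  rw [Gf_of_lt hsm, neg_le_neg_iff]
  exact Real.sqrt_le_sqrt (Qf_lower_zero hm hs0')

include hm in
lemma Gf_surj (w : ℝ) : ∃ s : ℝ, 0 < s ∧ Gf m s = w := by
  have hbot := (Gf_tendsto_zero hm).eventually (eventually_le_atBot w)
  obtain ⟨a, ha_mem, ha⟩ := (hbot.and eventually_mem_nhdsWithin).exists
  have ha0 : (0:ℝ) < a := ha
  have htop := (Gf_tendsto_atTop hm).eventually (eventually_ge_atTop w)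
  obtain ⟨b, hb, hab⟩ := (htop.and (eventually_ge_atTop a)).exists
  have hcont : ContinuousOn (Gf m) (Set.Icc a b) := fun x hx =>
    (Gf_continuousAt hm (ha0.trans_le hx.1)).continuousWithinAt
  have := intermediate_value_Icc hab hcont (Set.mem_Icc.2 ⟨ha_mem, hb⟩)
  obtain ⟨s, hs, hsw⟩ := this
  exact ⟨s, ha0.trans_le hs.1, hsw⟩

end Glimits

noncomputable def vf (m s : ℝ) : ℝ := (s - m) / Gf m s

section vprops
variable {m : ℝ} (hm : 0 < m)

include hm in
lemma vf_le_sqrt {s : ℝ} (hs : 0 < s) (hsm : s < m) : vf m s ≤ Real.sqrt m := by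
  have hQpos : 0 < Qf m s := Qf_pos hm hs hsm.ne
  have hsqQ : 0 < Real.sqrt (Qf m s) := Real.sqrt_pos.2 hQpos
  have h1 : (m - s) / Real.sqrt m ≤ Real.sqrt (Qf m s) := by
    have := Real.sqrt_le_sqrt (Qf_ge_left hm hs hsm.le)
    rwa [Real.sqrt_div (sq_nonneg _), Real.sqrt_sq_eq_abs, abs_sub_comm,
      abs_of_pos (by linarith : 0 < m - s)] at this
  have hv : vf m s = (m - s) / Real.sqrt (Qf m s) := by
    rw [vf, Gf_of_lt hsm, div_neg, ← neg_div, neg_sub]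
  rw [hv, div_le_iff₀ hsqQ]
  rw [div_le_iff₀ (Real.sqrt_pos.2 hm)] at h1
  linarith [h1]

include hm in
lemma sqrt_le_vf {s : ℝ} (hsm : m < s) : Real.sqrt m ≤ vf m s := by
  have hs : 0 < s := hm.trans hsm
  have hQpos : 0 < Qf m s := Qf_pos hm hs hsm.ne'
  have hsqQ : 0 < Real.sqrt (Qf m s) := Real.sqrt_pos.2 hQpos
  have h1 : Real.sqrt (Qf m s) ≤ (s - m) / Real.sqrt m := by
    have := Real.sqrt_le_sqrt (Qf_le_right hm hsm.le)
    rwa [Real.sqrt_div (sq_nonneg _), Real.sqrt_sq_eq_abs,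
      abs_of_pos (by linarith : 0 < s - m)] at this
  have hv : vf m s = (s - m) / Real.sqrt (Qf m s) := by
    rw [vf, Gf_of_ge hsm.le]
  rw [hv, le_div_iff₀ hsqQ]
  rw [le_div_iff₀ (Real.sqrt_pos.2 hm)] at h1
  linarith [h1]

include hm in
lemma vf_hasDerivAt {s : ℝ} (hs : 0 < s) (hne : s ≠ m) :
    HasDerivAt (vf m)
      ((1 * Gf m s - (s - m) * ((s - m) / (s * Gf m s))) / Gf m s ^ 2) s :=
  ((hasDerivAt_id s).sub_const m).div (Gf_hasDerivAt hm hs hne) (Gf_ne_zero hm hs hne)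

include hm in
lemma vf_monoOn_left : MonotoneOn (vf m) (Set.Ioo 0 m) := by
  apply monotoneOn_of_deriv_nonneg (convex_Ioo 0 m)
  · intro x hx
    exact (vf_hasDerivAt hm hx.1 hx.2.ne).continuousAt.continuousWithinAt
  · intro x hx
    rw [interior_Ioo] at hx
    exact (vf_hasDerivAt hm hx.1 hx.2.ne).differentiableAt.differentiableWithinAt
  · intro x hx
    rw [interior_Ioo] at hx
    rw [(vf_hasDerivAt hm hx.1 hx.2.ne).deriv]
    set z := Gf m x with hz
    have hzneg : z < 0 := Gf_neg_of_lt hm hx.1 hx.2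
    have hzsq : z ^ 2 = Qf m x := Gf_sq hm hx.1
    have hQle : x * z ^ 2 ≤ (x - m) ^ 2 := by
      rw [hzsq]
      have := Qf_le_left hm hx.1 hx.2.le
      rw [le_div_iff₀ hx.1] at this
      linarith [this]
    have hzne : z ≠ 0 := hzneg.ne
    have hxne : x ≠ 0 := hx.1.ne'
    have he : 1 * z - (x - m) * ((x - m) / (x * z)) = (x * z ^ 2 - (x - m) ^ 2) / (x * z) := by
      field_simp
    rw [he]
    apply div_nonneg _ (sq_nonneg z)
    exact div_nonneg_iff.2 (Or.inr ⟨by linarith,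
      mul_nonpos_iff.2 (Or.inl ⟨hx.1.le, hzneg.le⟩)⟩)

include hm in
lemma vf_monoOn_right : MonotoneOn (vf m) (Set.Ioi m) := by
  apply monotoneOn_of_deriv_nonneg (convex_Ioi m)
  · intro x hx
    exact (vf_hasDerivAt hm (hm.trans hx) hx.ne').continuousAt.continuousWithinAt
  · intro x hx
    rw [interior_Ioi] at hx
    exact (vf_hasDerivAt hm (hm.trans hx) hx.ne').differentiableAt.differentiableWithinAt
  · intro x hx
    rw [interior_Ioi] at hx
    have hx0 : 0 < x := hm.trans hx
    rw [(vf_hasDerivAt hm hx0 hx.ne').deriv]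
    set z := Gf m x with hz
    have hzpos : 0 < z := Gf_pos_of_gt hm hx
    have hzsq : z ^ 2 = Qf m x := Gf_sq hm hx0
    have hQge : (x - m) ^ 2 ≤ x * z ^ 2 := by
      rw [hzsq]
      have := Qf_ge_right hm hx.le
      rw [div_le_iff₀ hx0] at this
      linarith [this]
    have hzne : z ≠ 0 := hzpos.ne'
    have hxne : x ≠ 0 := hx0.ne'
    have he : 1 * z - (x - m) * ((x - m) / (x * z)) = (x * z ^ 2 - (x - m) ^ 2) / (x * z) := by
      field_simp
    rw [he]
    apply div_nonneg _ (sq_nonneg z)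
    exact div_nonneg (by linarith) (by positivity)

include hm in
lemma vf_quasiMono {s₁ s₂ : ℝ} (h1 : 0 < s₁) (h12 : s₁ < s₂) (hne1 : s₁ ≠ m)
    (hne2 : s₂ ≠ m) : vf m s₁ ≤ vf m s₂ := by
  rcases lt_or_gt_of_ne hne2 with h2m | h2m
  · exact vf_monoOn_left hm ⟨h1, h12.trans h2m⟩ ⟨h1.trans h12, h2m⟩ h12.le
  · rcases lt_or_gt_of_ne hne1 with h1m | h1m
    · exact (vf_le_sqrt hm h1 h1m).trans (sqrt_le_vf hm h2m)
    · exact vf_monoOn_right hm h1m (h1m.trans h12) h12.le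

end vprops

section integrab

lemma phif_eq : phif = fun z => Real.exp (-(1/2) * z ^ 2) * (Real.sqrt (2 * Real.pi))⁻¹ := by
  funext z
  rw [phif, div_eq_mul_inv]
  congr 2
  ring

lemma phif_integrable : Integrable phif := by
  rw [phif_eq]
  exact (integrable_exp_neg_mul_sq (by norm_num : (0:ℝ) < 1/2)).mul_const _

lemma phif_continuous : Continuous phif := by
  rw [phif_eq]
  exact (Real.continuous_exp.comp (by continuity)).mul continuous_const

lemma phif_measurable : Measurable phif := phif_continuous.measurable

variable {m : ℝ} (hm : 0 < m)

include hm in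
lemma gf_eq : gf m = fun x => Real.exp (-x) * x ^ (m - 1) * (Real.Gamma m)⁻¹ := by
  funext x
  rw [gf, div_eq_mul_inv]
  ring

include hm in
lemma gf_integrableOn : IntegrableOn (gf m) (Set.Ioi 0) := by
  rw [gf_eq hm]
  exact (Real.GammaIntegral_convergent hm).mul_const _

include hm in
lemma gf_measurable : Measurable (gf m) := by
  rw [gf_eq hm]
  exact ((Real.measurable_exp.comp measurable_neg).mul
    (measurable_id.pow_const _)).mul_const _

include hm in
lemma gf_continuousAt {s : ℝ} (hs : 0 < s) : ContinuousAt (gf m) s := by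
  rw [gf_eq hm]
  exact (((Real.continuous_exp.comp continuous_neg).continuousAt).mul
    (Real.continuousAt_rpow_const s (m - 1) (Or.inl hs.ne'))).mul continuousAt_const

/-- the gamma density restricted to positives -/
noncomputable def gb (m : ℝ) : ℝ → ℝ := (Set.Ioi (0:ℝ)).indicator (gf m)

include hm in
lemma gb_integrable : Integrable (gb m) :=
  (gf_integrableOn hm).integrable_indicator measurableSet_Ioi

include hm in
lemma gb_measurable : Measurable (gb m) :=
  (gf_measurable hm).indicator measurableSet_Ioi

include hm in
lemma gb_continuousAt {s : ℝ} (hs : 0 < s) : ContinuousAt (gb m) s := by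
  apply (gf_continuousAt hm hs).congr
  filter_upwards [Ioi_mem_nhds hs] with x hx
  exact (Set.indicator_of_mem hx _).symm

lemma Hf_eq_Iic (m : ℝ) (x : ℝ) : Hf m x = ∫ t in Set.Iic x, gb m t := by
  rw [Hf, gb, setIntegral_indicator measurableSet_Ioi, Set.inter_comm, Set.Ioi_inter_Iic]

lemma hasDerivAt_integral_Iic (f : ℝ → ℝ) (hf : Integrable f) (hmeas : Measurable f)
    {x : ℝ} (hc : ContinuousAt f x) :
    HasDerivAt (fun w => ∫ t in Set.Iic w, f t) (f x) x := by
  have key : (fun w => ∫ t in Set.Iic w, f t)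
      = fun w => (∫ t in Set.Iic 0, f t) + ∫ t in (0:ℝ)..w, f t := by
    funext w
    rw [← intervalIntegral.integral_Iic_sub_Iic hf.integrableOn hf.integrableOn]
    ring
  rw [key]
  exact (intervalIntegral.integral_hasDerivAt_right (hf.intervalIntegrable)
    (hmeas.stronglyMeasurable.stronglyMeasurableAtFilter) hc).const_add _

lemma Nf_hasDerivAt (w : ℝ) : HasDerivAt Nf (phif w) w :=
  hasDerivAt_integral_Iic phif phif_integrable phif_measurable
    phif_continuous.continuousAt

include hm in
lemma Hf_hasDerivAt {s : ℝ} (hs : 0 < s) : HasDerivAt (Hf m) (gf m s) s := by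
  have h : HasDerivAt (fun w => ∫ t in Set.Iic w, gb m t) (gb m s) s :=
    hasDerivAt_integral_Iic (gb m) (gb_integrable hm) (gb_measurable hm)
      (gb_continuousAt hm hs)
  have he : (fun w => ∫ t in Set.Iic w, gb m t) = Hf m := by
    funext x; exact (Hf_eq_Iic m x).symm
  rw [he] at h
  rwa [gb, Set.indicator_of_mem (Set.mem_Ioi.2 hs)] at h

lemma Nf_continuous : Continuous Nf := by
  have : ∀ w, HasDerivAt Nf (phif w) w := Nf_hasDerivAt
  exact continuous_iff_continuousAt.2 fun w => (this w).continuousAt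

include hm in
lemma Hf_continuousAt {s : ℝ} (hs : 0 < s) : ContinuousAt (Hf m) s :=
  (Hf_hasDerivAt hm hs).continuousAt

end integrab

noncomputable def c0 (m : ℝ) : ℝ :=
  m ^ m * Real.exp (-m) * Real.sqrt (2 * Real.pi) / Real.Gamma m

section deriv
variable {m : ℝ} (hm : 0 < m)

include hm in
lemma gf_key {s : ℝ} (hs : 0 < s) :
    s * (s ^ (m - 1) * Real.exp (-s))
      = Real.exp (-(Qf m s) / 2) * (m ^ m * Real.exp (-m)) := by
  calc s * (s ^ (m - 1) * Real.exp (-s))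
      = Real.exp (Real.log s) * (Real.exp (Real.log s * (m - 1)) * Real.exp (-s)) := by
        rw [Real.exp_log hs, Real.rpow_def_of_pos hs]
    _ = Real.exp (Real.log s + (Real.log s * (m - 1) + -s)) := by
        rw [Real.exp_add, Real.exp_add]
    _ = Real.exp (-(Qf m s) / 2 + (Real.log m * m + -m)) := by
        congr 1
        rw [Qf]
        ring
    _ = Real.exp (-(Qf m s) / 2) * (m ^ m * Real.exp (-m)) := by
        rw [Real.exp_add, Real.exp_add, Real.rpow_def_of_pos hm]

include hm in
lemma gf_eq_c0 {s : ℝ} (hs : 0 < s) :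
    gf m s = Real.exp (-Gf m s ^ 2 / 2) / (s * Real.sqrt (2 * Real.pi)) * c0 m := by
  have hkey := gf_key hm hs
  have hGam : Real.Gamma m ≠ 0 := (Real.Gamma_pos_of_pos hm).ne'
  have hsqrt : Real.sqrt (2 * Real.pi) ≠ 0 := by positivity
  rw [Gf_sq hm hs, gf, c0]
  field_simp
  rw [neg_div] at hkey
  linear_combination hkey

include hm in
lemma Ff_deriv_expr {s : ℝ} (hs : 0 < s) (hne : s ≠ m) :
    gf m s - phif (Gf m s) * ((s - m) / (s * Gf m s))
      = Real.exp (-Gf m s ^ 2 / 2) / (s * Real.sqrt (2 * Real.pi)) * (c0 m - vf m s) := by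
  have hz : Gf m s ≠ 0 := Gf_ne_zero hm hs hne
  have hsqrt : Real.sqrt (2 * Real.pi) ≠ 0 := by positivity
  rw [gf_eq_c0 hm hs, mul_sub]
  congr 1
  rw [phif, vf]
  field_simp

include hm in
lemma Ff_hasDerivAt {s : ℝ} (hs : 0 < s) (hne : s ≠ m) :
    HasDerivAt (Ff m)
      (gf m s - phif (Gf m s) * ((s - m) / (s * Gf m s))) s := by
  have hH := Hf_hasDerivAt hm hs
  have hG := Gf_hasDerivAt hm hs hne
  have hN := Nf_hasDerivAt (Gf m s)
  have hcomp := hN.comp s hG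
  exact hH.sub hcomp

include hm in
lemma Ff_deriv_nonneg {s : ℝ} (hs : 0 < s) (hne : s ≠ m) (hv : vf m s ≤ c0 m) :
    0 ≤ gf m s - phif (Gf m s) * ((s - m) / (s * Gf m s)) := by
  rw [Ff_deriv_expr hm hs hne]
  have h1 : 0 < Real.exp (-Gf m s ^ 2 / 2) / (s * Real.sqrt (2 * Real.pi)) := by
    apply div_pos (Real.exp_pos _)
    exact mul_pos hs (Real.sqrt_pos.2 (by positivity))
  exact mul_nonneg h1.le (by linarith)

include hm in
lemma Ff_deriv_nonpos {s : ℝ} (hs : 0 < s) (hne : s ≠ m) (hv : c0 m ≤ vf m s) :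
    gf m s - phif (Gf m s) * ((s - m) / (s * Gf m s)) ≤ 0 := by
  rw [Ff_deriv_expr hm hs hne]
  have h1 : 0 < Real.exp (-Gf m s ^ 2 / 2) / (s * Real.sqrt (2 * Real.pi)) := by
    apply div_pos (Real.exp_pos _)
    exact mul_pos hs (Real.sqrt_pos.2 (by positivity))
  exact mul_nonpos_iff.2 (Or.inl ⟨h1.le, by linarith⟩)

end deriv

section Fmono
variable {m : ℝ} (hm : 0 < m)

include hm in
lemma Ff_continuousWithinAt {x : ℝ} (hx : 0 < x) {D : Set ℝ} :
    ContinuousWithinAt (Ff m) D x := by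
  have h : ContinuousAt (Ff m) x := by
    apply ContinuousAt.sub (Hf_continuousAt hm hx)
    exact Nf_continuous.continuousAt.comp (Gf_continuousAt hm hx)
  exact h.continuousWithinAt

include hm in
lemma FM0 {a b : ℝ} (ha : 0 < a) (hab : a ≤ b) (hmnot : m ∉ Set.Ioo a b)
    (hv : ∀ s ∈ Set.Ioo a b, vf m s ≤ c0 m) : MonotoneOn (Ff m) (Set.Icc a b) := by
  apply monotoneOn_of_deriv_nonneg (convex_Icc a b)
  · exact fun x hx => Ff_continuousWithinAt hm (ha.trans_le hx.1)
  · intro x hx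
    rw [interior_Icc] at hx
    have hxne : x ≠ m := ne_of_mem_of_not_mem hx hmnot
    exact (Ff_hasDerivAt hm (ha.trans hx.1) hxne).differentiableAt.differentiableWithinAt
  · intro x hx
    rw [interior_Icc] at hx
    have hxne : x ≠ m := ne_of_mem_of_not_mem hx hmnot
    rw [(Ff_hasDerivAt hm (ha.trans hx.1) hxne).deriv]
    exact Ff_deriv_nonneg hm (ha.trans hx.1) hxne (hv x hx)

include hm in
lemma FA0 {a b : ℝ} (ha : 0 < a) (hab : a ≤ b) (hmnot : m ∉ Set.Ioo a b)
    (hv : ∀ s ∈ Set.Ioo a b, c0 m ≤ vf m s) : AntitoneOn (Ff m) (Set.Icc a b) := by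
  apply antitoneOn_of_deriv_nonpos (convex_Icc a b)
  · exact fun x hx => Ff_continuousWithinAt hm (ha.trans_le hx.1)
  · intro x hx
    rw [interior_Icc] at hx
    have hxne : x ≠ m := ne_of_mem_of_not_mem hx hmnot
    exact (Ff_hasDerivAt hm (ha.trans hx.1) hxne).differentiableAt.differentiableWithinAt
  · intro x hx
    rw [interior_Icc] at hx
    have hxne : x ≠ m := ne_of_mem_of_not_mem hx hmnot
    rw [(Ff_hasDerivAt hm (ha.trans hx.1) hxne).deriv]
    exact Ff_deriv_nonpos hm (ha.trans hx.1) hxne (hv x hx)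

include hm in
lemma FMle {a b : ℝ} (ha : 0 < a) (hab : a ≤ b)
    (hv : ∀ s ∈ Set.Ioo a b, s ≠ m → vf m s ≤ c0 m) : Ff m a ≤ Ff m b := by
  by_cases hmem : m ∈ Set.Ioo a b
  · have h1 : Ff m a ≤ Ff m m := by
      apply FM0 hm ha hmem.1.le (fun h => (lt_irrefl m h.2).elim)
        (fun s hs => hv s ⟨hs.1, hs.2.trans hmem.2⟩ hs.2.ne)
        (Set.mem_Icc.2 ⟨le_rfl, hmem.1.le⟩) (Set.mem_Icc.2 ⟨hmem.1.le, le_rfl⟩) hmem.1.le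
    have h2 : Ff m m ≤ Ff m b := by
      apply FM0 hm hm hmem.2.le (fun h => (lt_irrefl m h.1).elim)
        (fun s hs => hv s ⟨hmem.1.trans hs.1, hs.2⟩ hs.1.ne')
        (Set.mem_Icc.2 ⟨le_rfl, hmem.2.le⟩) (Set.mem_Icc.2 ⟨hmem.2.le, le_rfl⟩) hmem.2.le
    exact h1.trans h2
  · exact FM0 hm ha hab hmem (fun s hs => hv s hs (ne_of_mem_of_not_mem hs hmem))
      (Set.mem_Icc.2 ⟨le_rfl, hab⟩) (Set.mem_Icc.2 ⟨hab, le_rfl⟩) hab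

include hm in
lemma FAle {a b : ℝ} (ha : 0 < a) (hab : a ≤ b)
    (hv : ∀ s ∈ Set.Ioo a b, s ≠ m → c0 m ≤ vf m s) : Ff m b ≤ Ff m a := by
  by_cases hmem : m ∈ Set.Ioo a b
  · have h1 : Ff m m ≤ Ff m a := by
      apply FA0 hm ha hmem.1.le (fun h => (lt_irrefl m h.2).elim)
        (fun s hs => hv s ⟨hs.1, hs.2.trans hmem.2⟩ hs.2.ne)
        (Set.mem_Icc.2 ⟨le_rfl, hmem.1.le⟩) (Set.mem_Icc.2 ⟨hmem.1.le, le_rfl⟩) hmem.1.le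
    have h2 : Ff m b ≤ Ff m m := by
      apply FA0 hm hm hmem.2.le (fun h => (lt_irrefl m h.1).elim)
        (fun s hs => hv s ⟨hmem.1.trans hs.1, hs.2⟩ hs.1.ne')
        (Set.mem_Icc.2 ⟨le_rfl, hmem.2.le⟩) (Set.mem_Icc.2 ⟨hmem.2.le, le_rfl⟩) hmem.2.le
    exact h2.trans h1
  · exact FA0 hm ha hab hmem (fun s hs => hv s hs (ne_of_mem_of_not_mem hs hmem))
      (Set.mem_Icc.2 ⟨le_rfl, hab⟩) (Set.mem_Icc.2 ⟨hab, le_rfl⟩) hab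

end Fmono

section limits
variable {m : ℝ} (hm : 0 < m)

lemma integral_phif_eq_one : (∫ z, phif z) = 1 := by
  rw [phif_eq, integral_mul_const]
  have hg := integral_gaussian (1/2 : ℝ)
  rw [hg]
  have h2 : Real.pi / (1/2 : ℝ) = 2 * Real.pi := by ring
  rw [h2]
  exact mul_inv_cancel₀ (by positivity)

include hm in
lemma integral_gf_eq_one : (∫ s in Set.Ioi (0:ℝ), gf m s) = 1 := by
  rw [gf_eq hm, integral_mul_const, ← Real.Gamma_eq_integral hm]
  exact mul_inv_cancel₀ (Real.Gamma_pos_of_pos hm).ne'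

include hm in
lemma tendsto_Ff_zero {p : ℝ} (hp : 0 < p) :
    Tendsto (fun n : ℕ => Ff m (p / (n + 1))) atTop (𝓝 0) := by
  have hpos : ∀ n : ℕ, (0:ℝ) < p / (n + 1) := fun n => by positivity
  have hanti : ∀ ⦃i j : ℕ⦄, i ≤ j → p / (j + 1) ≤ p / (i + 1) := by
    intro i j hij
    have h1 : ((i:ℝ) + 1) ≤ (j:ℝ) + 1 := by exact_mod_cast Nat.succ_le_succ hij
    gcongr
  -- H part
  have hH : Tendsto (fun n : ℕ => Hf m (p / (n + 1))) atTop (𝓝 0) := by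
    have h := tendsto_setIntegral_of_antitone (μ := volume)
      (s := fun n : ℕ => Set.Ioc (0:ℝ) (p / (n + 1)))
      (f := gf m) (fun n => measurableSet_Ioc)
      (fun i j hij => Set.Ioc_subset_Ioc_right (hanti hij))
      ⟨0, (gf_integrableOn hm).mono_set Set.Ioc_subset_Ioi_self⟩
    have hempty : (⋂ n : ℕ, Set.Ioc (0:ℝ) (p / (n + 1))) = ∅ := by
      rw [Set.eq_empty_iff_forall_notMem]
      intro x hx
      have hx0 : 0 < x := (Set.mem_iInter.1 hx 0).1
      obtain ⟨n, hn⟩ := exists_nat_gt (p / x)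
      have hxn := (Set.mem_iInter.1 hx n).2
      have : p / ((n:ℝ) + 1) < x := by
        rw [div_lt_iff₀ (by positivity)]
        rw [div_lt_iff₀ hx0] at hn
        nlinarith [hx0]
      linarith
    rw [hempty] at h
    simpa [Hf] using h
  -- sequence tends to zero within Ioi 0
  have hseq : Tendsto (fun n : ℕ => p / (n + 1)) atTop (𝓝[>] (0:ℝ)) := by
    apply tendsto_nhdsWithin_of_tendsto_nhds_of_eventually_within
    · have h0 := tendsto_one_div_add_atTop_nhds_zero_nat.const_mul p
      simpa [mul_one_div, div_eq_mul_inv] using h0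
    · exact Eventually.of_forall fun n => hpos n
  have hw : Tendsto (fun n : ℕ => Gf m (p / (n + 1))) atTop atBot :=
    (Gf_tendsto_zero hm).comp hseq
  have hwanti : ∀ ⦃i j : ℕ⦄, i ≤ j → Gf m (p / (j + 1)) ≤ Gf m (p / (i + 1)) := by
    intro i j hij
    exact (Gf_strictMonoOn hm).monotoneOn (Set.mem_Ioi.2 (hpos j))
      (Set.mem_Ioi.2 (hpos i)) (hanti hij)
  have hN : Tendsto (fun n : ℕ => Nf (Gf m (p / (n + 1)))) atTop (𝓝 0) := by
    have h := tendsto_setIntegral_of_antitone (μ := volume)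
      (s := fun n : ℕ => Set.Iic (Gf m (p / (n + 1))))
      (f := phif) (fun n => measurableSet_Iic)
      (fun i j hij => Set.Iic_subset_Iic.2 (hwanti hij))
      ⟨0, phif_integrable.integrableOn⟩
    have hempty : (⋂ n : ℕ, Set.Iic (Gf m (p / (n + 1)))) = ∅ := by
      rw [Set.eq_empty_iff_forall_notMem]
      intro x hx
      obtain ⟨n, hn⟩ := (hw.eventually (eventually_lt_atBot x)).exists
      exact absurd (Set.mem_iInter.1 hx n) (not_le.2 hn)
    rw [hempty] at h
    simpa [Nf] using h
  have := hH.sub hN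
  simpa [Ff] using this

include hm in
lemma tendsto_Ff_top {p : ℝ} (hp : 0 < p) :
    Tendsto (fun n : ℕ => Ff m (p + n)) atTop (𝓝 0) := by
  have hpos : ∀ n : ℕ, (0:ℝ) < p + n := fun n => by positivity
  have hmono : ∀ ⦃i j : ℕ⦄, i ≤ j → p + (i:ℝ) ≤ p + j := by
    intro i j hij
    have : (i:ℝ) ≤ j := by exact_mod_cast hij
    linarith
  have hH : Tendsto (fun n : ℕ => Hf m (p + n)) atTop (𝓝 1) := by
    have hunion : (⋃ n : ℕ, Set.Ioc (0:ℝ) (p + n)) = Set.Ioi 0 := by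
      apply Set.eq_of_subset_of_subset
      · exact Set.iUnion_subset fun n => Set.Ioc_subset_Ioi_self
      · intro x hx
        obtain ⟨n, hn⟩ := exists_nat_ge (x : ℝ)
        exact Set.mem_iUnion.2 ⟨n, hx, by linarith [hn, hp]⟩
    have h := tendsto_setIntegral_of_monotone (μ := volume)
      (s := fun n : ℕ => Set.Ioc (0:ℝ) (p + n))
      (f := gf m) (fun n => measurableSet_Ioc)
      (fun i j hij => Set.Ioc_subset_Ioc_right (hmono hij))
      (by rw [hunion]; exact gf_integrableOn hm)
    rw [hunion, integral_gf_eq_one hm] at h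
    exact h
  have hw : Tendsto (fun n : ℕ => Gf m (p + n)) atTop atTop := by
    apply (Gf_tendsto_atTop hm).comp
    exact tendsto_atTop_add_const_left _ p tendsto_natCast_atTop_atTop
  have hwmono : ∀ ⦃i j : ℕ⦄, i ≤ j → Gf m (p + i) ≤ Gf m (p + j) := fun i j hij =>
    (Gf_strictMonoOn hm).monotoneOn (Set.mem_Ioi.2 (hpos i))
      (Set.mem_Ioi.2 (hpos j)) (hmono hij)
  have hN : Tendsto (fun n : ℕ => Nf (Gf m (p + n))) atTop (𝓝 1) := by
    have hunion : (⋃ n : ℕ, Set.Iic (Gf m (p + n))) = Set.univ := by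
      apply Set.eq_univ_of_forall
      intro x
      obtain ⟨n, hn⟩ := (hw.eventually (eventually_ge_atTop x)).exists
      exact Set.mem_iUnion.2 ⟨n, hn⟩
    have h := tendsto_setIntegral_of_monotone (μ := volume)
      (s := fun n : ℕ => Set.Iic (Gf m (p + n)))
      (f := phif) (fun n => measurableSet_Iic)
      (fun i j hij => Set.Iic_subset_Iic.2 (hwmono hij))
      (by rw [hunion]; exact phif_integrable.integrableOn)
    rw [hunion] at h
    rw [setIntegral_univ, integral_phif_eq_one] at h
    exact h
  have := hH.sub hN
  simpa [Ff] using this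

end limits

section main
variable {m : ℝ} (hm : 0 < m)

include hm in
lemma Ff_nonneg {p : ℝ} (hp : 0 < p) : 0 ≤ Ff m p := by
  by_cases hcase : ∀ s ∈ Set.Ioo (0:ℝ) p, s ≠ m → vf m s ≤ c0 m
  · -- F is monotone on (0, p]
    have hseq : ∀ n : ℕ, Ff m (p / (n + 1)) ≤ Ff m p := by
      intro n
      have hpn : (0:ℝ) < p / (n + 1) := by positivity
      apply FMle hm hpn
      · apply div_le_self hp.le
        have : (1:ℝ) ≤ (n:ℝ) + 1 := by
          have := n.cast_nonneg (α := ℝ); linarith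
        linarith
      · intro s hs hsne
        exact hcase s ⟨hpn.trans hs.1, hs.2⟩ hsne
    exact le_of_tendsto (tendsto_Ff_zero hm hp) (Eventually.of_forall hseq)
  · push_neg at hcase
    obtain ⟨s₁, hs₁mem, hs₁ne, hs₁v⟩ := hcase
    have hseq : ∀ n : ℕ, Ff m (p + n) ≤ Ff m p := by
      intro n
      apply FAle hm hp (le_add_of_nonneg_right n.cast_nonneg)
      intro s hs hsne
      have h12 : s₁ < s := hs₁mem.2.trans hs.1
      exact hs₁v.le.trans (vf_quasiMono hm hs₁mem.1 h12 hs₁ne hsne)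
    exact le_of_tendsto (tendsto_Ff_top hm hp) (Eventually.of_forall hseq)

end main

/-- The G-transform of a `Γ(m,1)`-distributed random variable is stochastically less than a
standard Gaussian: `P(Z ≤ w) ≤ P(G(T) ≤ w)` for all real `w`. -/
theorem G_transform_gamma_le_gaussian (m : ℝ) (hm : 0 < m) (G : ℝ → ℝ)
    (hG : G = fun s : ℝ =>
      if s < m then -Real.sqrt (2 * (s - m - m * Real.log (s / m)))
      else Real.sqrt (2 * (s - m - m * Real.log (s / m))))
    (g : ℝ → ℝ) (hg : g = fun s : ℝ => s ^ (m - 1) * Real.exp (-s) / Real.Gamma m) :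
    ∀ w : ℝ,
      (∫ z in Set.Iic w, Real.exp (-z ^ 2 / 2) / Real.sqrt (2 * Real.pi))
        ≤ ∫ s in {s : ℝ | 0 < s ∧ G s ≤ w}, g s := by
  intro w
  have hGf_eq : ∀ s : ℝ, 0 < s → G s = Gf m s := by
    intro s hs
    rw [hG]
    simp only [Gf, Qf]
    rw [Real.log_div hs.ne' hm.ne']
  obtain ⟨sw, hsw0, hsww⟩ := Gf_surj hm w
  have hset : {s : ℝ | 0 < s ∧ G s ≤ w} = Set.Ioc 0 sw := by
    ext s
    simp only [Set.mem_setOf_eq, Set.mem_Ioc]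
    constructor
    · rintro ⟨hs0, hsle⟩
      refine ⟨hs0, ?_⟩
      rw [hGf_eq s hs0, ← hsww] at hsle
      exact ((Gf_strictMonoOn hm).le_iff_le (Set.mem_Ioi.2 hs0)
        (Set.mem_Ioi.2 hsw0)).1 hsle
    · rintro ⟨hs0, hsle⟩
      refine ⟨hs0, ?_⟩
      rw [hGf_eq s hs0, ← hsww]
      exact ((Gf_strictMonoOn hm).le_iff_le (Set.mem_Ioi.2 hs0)
        (Set.mem_Ioi.2 hsw0)).2 hsle
  rw [hset]
  have hL : (∫ z in Set.Iic w, Real.exp (-z ^ 2 / 2) / Real.sqrt (2 * Real.pi)) = Nf w := rfl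
  have hR : (∫ s in Set.Ioc (0:ℝ) sw, g s) = Hf m sw := by
    rw [hg]; rfl
  rw [hL, hR, ← hsww]
  have := Ff_nonneg hm hsw0
  rw [Ff] at this
  linarith
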